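/- Cyclic hashing becomes pairwise independent after discarding n−1 consecutive bits: let h₁ : Σ → GF(2)[x]/(x^L+1) be uniformly random, define h(a₁,…,a_n) = Σᵢ h₁(aᵢ) x^{n-i} mod (x^L+1), and fix any n−1 consecutive (mod L) coefficient positions. Then for any two distinct n-grams a ≠ a' and any values y, y' of the remaining L−n+1 coefficients, P(h(a) ≡ y and h(a') ≡ y' on the remaining positions) = 2^{-2(L-n+1)}. -/

import Mathlib

/-- Uniform probability of an event over a finite sample space. -/
noncomputable def prob (Ω : Type*) (p : Ω → Prop) : ℚ :=
  (Nat.card {ω : Ω // p ω} : ℚ) / (Nat.card Ω : ℚ)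

open Polynomial

namespace CPI

open AdjoinRoot



lemma nm_inj {L : ℕ} (hL : 0 < L) {a b : ℕ} (ha : a < L) (hb : b < L)
    (h : (a : ZMod L) = b) : a = b := by
  haveI : NeZero L := ⟨hL.ne'⟩
  have := congrArg ZMod.val h
  rwa [ZMod.val_cast_of_lt ha, ZMod.val_cast_of_lt hb] at this

lemma cast_sub_mod (L b : ℕ) (h : b ≤ L) : ((L - b : ℕ) : ZMod L) = -(b : ZMod L) := by
  rw [Nat.cast_sub h, ZMod.natCast_self, zero_sub]

lemma mod_eq_of_cast {L : ℕ} (hL : 0 < L) {a b : ℕ} (hb : b < L)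
    (h : (a : ZMod L) = b) : a % L = b := by
  have := (ZMod.natCast_eq_natCast_iff' a b L).mp h
  rwa [Nat.mod_eq_of_lt hb] at this

lemma mod_eq_mod_of_cast {L : ℕ} {a b : ℕ} (h : (a : ZMod L) = b) : a % L = b % L :=
  (ZMod.natCast_eq_natCast_iff' a b L).mp h

lemma N1 {L : ℕ} (hL : 0 < L) (m j : ℕ) (hj : j < L) :
    (m + (j + (L - m % L)) % L) % L = j := by
  have h1 : m % L ≤ L := le_of_lt (Nat.mod_lt _ hL)
  apply mod_eq_of_cast hL hj
  simp only [Nat.cast_add, ZMod.natCast_mod, cast_sub_mod L (m % L) h1]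
  ring

lemma N2 {L : ℕ} (hL : 0 < L) {m k j : ℕ} (hk : k < L) (h : (m + k) % L = j) :
    k = (j + (L - m % L)) % L := by
  subst h
  have h1 : m % L ≤ L := le_of_lt (Nat.mod_lt _ hL)
  symm
  apply mod_eq_of_cast hL hk
  simp only [Nat.cast_add, ZMod.natCast_mod, cast_sub_mod L (m % L) h1]
  ring

lemma N3 {L : ℕ} {k : ℕ} (hk : k < L) (j : ℕ) :
    (j + (L - ((L - k) % L) % L)) % L = (j + k) % L := by
  have hL : 0 < L := lt_of_le_of_lt (Nat.zero_le k) hk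
  have h1 : (L - k) % L % L ≤ L := le_of_lt (Nat.mod_lt _ hL)
  apply mod_eq_mod_of_cast
  simp only [Nat.cast_add, ZMod.natCast_mod, cast_sub_mod L _ h1,
    cast_sub_mod L k hk.le]
  ring



noncomputable abbrev Mp (L : ℕ) : Polynomial (ZMod 2) := X ^ L + 1

variable {L : ℕ}

lemma MpC (L : ℕ) : Mp L = X ^ L + C 1 := by rw [map_one]

lemma monicM (hL : 0 < L) : (Mp L).Monic := by
  rw [MpC]; exact monic_X_pow_add_C _ hL.ne'

lemma degM (hL : 0 < L) : (Mp L).degree = L := by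
  rw [MpC]; exact degree_X_pow_add_C hL 1

lemma Mne1 (hL : 0 < L) : Mp L ≠ 1 := by
  intro h
  have h2 := degM hL
  rw [h, degree_one] at h2
  have : (0 : ℕ) = L := by exact_mod_cast h2
  omega

lemma char2 : (1 : AdjoinRoot (Mp L)) + 1 = 0 := by
  have h : ((1 : ZMod 2) + 1 = 0) := rfl
  have := congrArg (algebraMap (ZMod 2) (AdjoinRoot (Mp L))) h
  simpa using this

lemma add_self_eq_zero' (A : AdjoinRoot (Mp L)) : A + A = 0 := by
  have : A + A = (1 + 1 : AdjoinRoot (Mp L)) * A := by ring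
  rw [this, char2, zero_mul]

lemma root_pow_L (hL : 0 < L) : (root (Mp L)) ^ L = 1 := by
  have h2 : (root (Mp L)) ^ L + 1 = 0 := by
    have h : AdjoinRoot.mk (Mp L) (X ^ L + 1) = 0 := mk_self
    rwa [map_add, map_pow, AdjoinRoot.mk_X, map_one] at h
  have := congrArg (· + 1) h2
  simpa [add_assoc, char2] using this

lemma root_pow_mod (hL : 0 < L) (d : ℕ) :
    (root (Mp L)) ^ d = (root (Mp L)) ^ (d % L) := by
  conv_lhs => rw [← Nat.div_add_mod d L]
  rw [pow_add, pow_mul, root_pow_L hL, one_pow, one_mul]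

noncomputable def rep (hL : 0 < L) : AdjoinRoot (Mp L) →ₗ[ZMod 2] Polynomial (ZMod 2) :=
  AdjoinRoot.modByMonicHom (monicM hL)

lemma rep_mk (hL : 0 < L) (p : Polynomial (ZMod 2)) :
    rep hL (AdjoinRoot.mk (Mp L) p) = p %ₘ Mp L :=
  AdjoinRoot.modByMonicHom_mk (monicM hL) p

lemma mk_rep (hL : 0 < L) (Z : AdjoinRoot (Mp L)) :
    AdjoinRoot.mk (Mp L) (rep hL Z) = Z :=
  AdjoinRoot.mk_leftInverse (monicM hL) Z

lemma rep_eq_zero_iff (hL : 0 < L) (Z : AdjoinRoot (Mp L)) :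
    rep hL Z = 0 ↔ Z = 0 :=
  ⟨fun h => by rw [← mk_rep hL Z, h, map_zero], fun h => by rw [h, map_zero]⟩

lemma rep_deg (hL : 0 < L) (Z : AdjoinRoot (Mp L)) : (rep hL Z).degree < L := by
  obtain ⟨z, rfl⟩ := AdjoinRoot.mk_surjective Z
  rw [rep_mk]
  have := degree_modByMonic_lt z (monicM hL)
  rwa [degM hL] at this

lemma rep_mk_self (hL : 0 < L) {p : Polynomial (ZMod 2)} (h : p.degree < L) :
    rep hL (AdjoinRoot.mk (Mp L) p) = p := by
  rw [rep_mk]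
  exact (modByMonic_eq_self_iff (monicM hL)).mpr (by rwa [degM hL])

lemma rep_root_pow (hL : 0 < L) (d : ℕ) :
    rep hL ((root (Mp L)) ^ d) = X ^ (d % L) := by
  rw [root_pow_mod hL d, ← AdjoinRoot.mk_X, ← map_pow]
  apply rep_mk_self hL
  rw [degree_X_pow]
  exact_mod_cast Nat.mod_lt d hL


lemma rot (hL : 0 < L) (Z : AdjoinRoot (Mp L)) (m j : ℕ) (hj : j < L) :
    (rep hL ((root (Mp L)) ^ m * Z)).coeff j
      = (rep hL Z).coeff ((j + (L - m % L)) % L) := by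
  set p := rep hL Z with hp
  have hpdeg : p.natDegree < L := by
    by_cases h0 : p = 0
    · simpa [h0] using hL
    · exact (natDegree_lt_iff_degree_lt h0).mpr (by exact_mod_cast rep_deg hL Z)
  have hZ : Z = AdjoinRoot.mk (Mp L) p := (mk_rep hL Z).symm
  have hsum : (root (Mp L)) ^ m * Z
      = ∑ k ∈ Finset.range L, p.coeff k • ((root (Mp L)) ^ (m + k)) := by
    conv_lhs => rw [hZ, as_sum_range' p L hpdeg]
    rw [map_sum, Finset.mul_sum]
    refine Finset.sum_congr rfl fun k _ => ?_
    rw [← smul_X_eq_monomial, ← AdjoinRoot.smul_mk, map_pow, AdjoinRoot.mk_X,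
      mul_smul_comm, pow_add]
  rw [hsum, map_sum]
  have hterm : ∀ k ∈ Finset.range L,
      rep hL (p.coeff k • (root (Mp L)) ^ (m + k)) = p.coeff k • (X : Polynomial (ZMod 2)) ^ ((m + k) % L) := by
    intro k _
    rw [map_smul, rep_root_pow hL]
  rw [Finset.sum_congr rfl hterm, finset_sum_coeff]
  simp only [coeff_smul, coeff_X_pow, smul_eq_mul]
  rw [Finset.sum_eq_single ((j + (L - m % L)) % L)]
  · rw [if_pos (N1 hL m j hj).symm, mul_one]
  · intro k hk hne
    rw [if_neg, mul_zero]
    intro h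
    exact hne (N2 hL (Finset.mem_range.mp hk) h.symm)
  · intro h
    exact absurd (Finset.mem_range.mpr (Nat.mod_lt _ hL)) h

lemma deg_le_pred {q : Polynomial (ZMod 2)} {n : ℕ} (h : q.degree < (n : WithBot ℕ)) :
    q.degree ≤ ((n - 1 : ℕ) : WithBot ℕ) := by
  by_cases hq0 : q = 0
  · simp [hq0]
  · rw [degree_eq_natDegree hq0] at h ⊢
    have : q.natDegree < n := by exact_mod_cast h
    exact_mod_cast (by omega : q.natDegree ≤ n - 1)

lemma NKEY {L n s' : ℕ} (hL : 0 < L) (hn : 0 < n) (hnL : n ≤ L) {j : ℕ}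
    (hj1 : L - n + 1 ≤ j) (hjL : j < L) :
    (j + (L - ((2 * L - (n - 1) - s' % L) % L) % L)) % L
      = (s' + (j - (L - n + 1))) % L := by
  have h1 : (2 * L - (n - 1) - s' % L) % L % L ≤ L := le_of_lt (Nat.mod_lt _ hL)
  have h2 : s' % L ≤ 2 * L - (n - 1) := by
    have := Nat.mod_lt s' hL; omega
  have h3 : n - 1 ≤ 2 * L := by omega
  apply mod_eq_mod_of_cast
  have e1 : (((2 * L - (n - 1) - s' % L) % L % L : ℕ) : ZMod L)
      = -(((n - 1 : ℕ) : ZMod L)) - (s' : ZMod L) := by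
    rw [ZMod.natCast_mod, ZMod.natCast_mod, Nat.cast_sub h2, Nat.cast_sub h3,
      ZMod.natCast_mod]
    push_cast
    rw [ZMod.natCast_self]
    ring
  rw [Nat.cast_add, cast_sub_mod L _ h1, e1]
  have e2 : ((j - (L - n + 1) : ℕ) : ZMod L) = (j : ZMod L) - ((L - n + 1 : ℕ) : ZMod L) := by
    rw [Nat.cast_sub hj1]
  rw [Nat.cast_add, e2]
  have e3 : ((L - n + 1 : ℕ) : ZMod L) = -(n : ZMod L) + 1 := by
    rw [Nat.cast_add, Nat.cast_sub hnL, ZMod.natCast_self]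
    push_cast
    ring
  have e4 : ((n - 1 : ℕ) : ZMod L) = (n : ZMod L) - 1 := by
    rw [Nat.cast_sub hn]
    push_cast
    ring
  rw [e3, e4]
  ring

lemma key (hL : 0 < L) {n : ℕ} (hn : 0 < n) (hnL : n ≤ L) (q Zp : Polynomial (ZMod 2))
    (hq : q ≠ 0) (hdq : q.degree < (n : WithBot ℕ)) (hZdeg : Zp.degree < (L : WithBot ℕ))
    (s' : ℕ) (hwin : ∀ t < n - 1, Zp.coeff ((s' + t) % L) = 0)
    (h0 : AdjoinRoot.mk (Mp L) q * AdjoinRoot.mk (Mp L) Zp = 0) : Zp = 0 := by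
  set m := (2 * L - (n - 1) - s' % L) % L with hm
  set Z2 := rep hL ((root (Mp L)) ^ m * AdjoinRoot.mk (Mp L) Zp) with hZ2
  have hZ2degL : Z2.degree < (L : WithBot ℕ) := rep_deg hL _
  have hZ2deg : Z2.degree < ((L - n + 1 : ℕ) : WithBot ℕ) := by
    rw [degree_lt_iff_coeff_zero]
    intro j hj
    have hj' : L - n + 1 ≤ j := by exact_mod_cast hj
    by_cases hjL : j < L
    · rw [hZ2, rot hL _ m j hjL, rep_mk_self hL hZdeg, NKEY hL hn hnL hj' hjL]
      exact hwin _ (by omega)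
    · exact coeff_eq_zero_of_degree_lt
        (lt_of_lt_of_le hZ2degL (by exact_mod_cast Nat.le_of_not_lt hjL))
  have hZ2zero : Z2 = 0 := by
    have hdvd : Mp L ∣ q * Z2 := by
      rw [← AdjoinRoot.mk_eq_zero, map_mul, mk_rep hL, mul_left_comm, h0, mul_zero]
    have hqZ2 : q * Z2 = 0 := by
      apply eq_zero_of_dvd_of_degree_lt hdvd
      rw [degM hL]
      calc (q * Z2).degree = q.degree + Z2.degree := degree_mul
        _ ≤ ((n - 1 : ℕ) : WithBot ℕ) + ((L - n + 1 - 1 : ℕ) : WithBot ℕ) :=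
            add_le_add (deg_le_pred hdq) (deg_le_pred hZ2deg)
        _ = (((n - 1) + (L - n + 1 - 1) : ℕ) : WithBot ℕ) := by
            rw [Nat.cast_add]
        _ < (L : WithBot ℕ) := by exact_mod_cast (by omega : (n-1) + (L-n+1-1) < L)
    rcases mul_eq_zero.mp hqZ2 with h | h
    · exact absurd h hq
    · exact h
  have hrz : (root (Mp L)) ^ m * AdjoinRoot.mk (Mp L) Zp = 0 :=
    (rep_eq_zero_iff hL _).mp (by rw [← hZ2]; exact hZ2zero)
  have hmk : AdjoinRoot.mk (Mp L) Zp = 0 := by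
    have h3 := congrArg (fun w => (root (Mp L)) ^ (L - m % L) * w) hrz
    simp only [mul_zero] at h3
    rw [← mul_assoc, ← pow_add] at h3
    have he : (L - m % L + m) % L = 0 := by
      apply mod_eq_of_cast hL hL
      have h1 : m % L ≤ L := le_of_lt (Nat.mod_lt _ hL)
      rw [Nat.cast_add, cast_sub_mod L _ h1, ZMod.natCast_mod, Nat.cast_zero]
      ring
    rwa [root_pow_mod hL, he, pow_zero, one_mul] at h3
  rw [AdjoinRoot.mk_eq_zero] at hmk
  exact eq_zero_of_dvd_of_degree_lt hmk (by rwa [degM hL])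


/-! ### Surjectivity setup -/

variable {σ : Type*} [Fintype σ] [DecidableEq σ]

/-- remaining coefficient positions -/
abbrev Idx (n L s : ℕ) : Type := {k : ℕ // k < L ∧ ∀ t < n - 1, k ≠ (s + t) % L}

instance (n L s : ℕ) : Fintype (Idx n L s) :=
  Fintype.ofFinset ((Finset.range L).filter (fun k => ∀ t < n - 1, k ≠ (s + t) % L))
    (by intro k; rw [Finset.mem_filter, Finset.mem_range]; exact Iff.rfl)

/-- the character multiplier polynomial -/
noncomputable def pc (n : ℕ) (b : Fin n → σ) (c : σ) : Polynomial (ZMod 2) :=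
  ∑ i ∈ Finset.univ.filter (fun i => b i = c), X ^ (n - 1 - (i : ℕ))

lemma deg_fin_sum_lt {n : ℕ} (hn : 0 < n) (sfin : Finset (Fin n)) :
    (∑ i ∈ sfin, (X : Polynomial (ZMod 2)) ^ (n - 1 - (i : ℕ))).degree < (n : WithBot ℕ) := by
  apply lt_of_le_of_lt (degree_sum_le _ _)
  have hbot : (⊥ : WithBot ℕ) < (n : WithBot ℕ) := by exact_mod_cast WithBot.bot_lt_coe n
  refine (Finset.sup_lt_iff hbot).mpr fun i _ => ?_
  rw [degree_X_pow]
  exact_mod_cast (by omega : n - 1 - (i : ℕ) < n)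

lemma deg_pc_lt {n : ℕ} (hn : 0 < n) (b : Fin n → σ) (c : σ) :
    (pc n b c).degree < (n : WithBot ℕ) := deg_fin_sum_lt hn _

lemma sum_pc {n : ℕ} (b : Fin n → σ) :
    ∑ c : σ, pc n b c = ∑ i : Fin n, (X : Polynomial (ZMod 2)) ^ (n - 1 - (i : ℕ)) := by
  unfold pc
  exact Finset.sum_fiberwise_of_maps_to (fun i _ => Finset.mem_univ (b i)) _

/-- the hash polynomial -/
noncomputable def SS {L : ℕ} (n : ℕ) (b : Fin n → σ) (h : σ → degreeLT (ZMod 2) L) :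
    Polynomial (ZMod 2) :=
  ∑ i : Fin n, ((h (b i) : Polynomial (ZMod 2))) * X ^ (n - 1 - (i : ℕ))

lemma SS_add {L n : ℕ} (b : Fin n → σ) (h g : σ → degreeLT (ZMod 2) L) :
    SS n b (h + g) = SS n b h + SS n b g := by
  unfold SS
  rw [← Finset.sum_add_distrib]
  refine Finset.sum_congr rfl fun i _ => ?_
  simp only [Pi.add_apply, Submodule.coe_add]
  ring

lemma SS_smul {L n : ℕ} (b : Fin n → σ) (r : ZMod 2) (h : σ → degreeLT (ZMod 2) L) :
    SS n b (r • h) = r • SS n b h := by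
  unfold SS
  rw [Finset.smul_sum]
  refine Finset.sum_congr rfl fun i _ => ?_
  simp only [Pi.smul_apply, SetLike.val_smul, smul_mul_assoc]

lemma SS_single {L n : ℕ} (b : Fin n → σ) (c : σ) (w : degreeLT (ZMod 2) L) :
    SS n b (Pi.single c w) = (w : Polynomial (ZMod 2)) * pc n b c := by
  unfold SS pc
  rw [Finset.mul_sum, ← Finset.sum_filter_of_ne (p := fun i => b i = c)]
  · refine Finset.sum_congr rfl fun i hi => ?_
    rw [Pi.single_apply, if_pos (Finset.mem_filter.mp hi).2]
  · intro i _ hne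
    by_contra hbc
    apply hne
    rw [Pi.single_apply, if_neg hbc]
    simp

/-- The full linear map -/
noncomputable def TT (n L s : ℕ) (a a' : Fin n → σ) :
    (σ → degreeLT (ZMod 2) L) →ₗ[ZMod 2]
      ((Idx n L s → ZMod 2) × (Idx n L s → ZMod 2)) where
  toFun h := (fun k => (SS n a h %ₘ Mp L).coeff (k : ℕ),
              fun k => (SS n a' h %ₘ Mp L).coeff (k : ℕ))
  map_add' h g := by
    refine Prod.ext ?_ ?_ <;> funext k <;>
      simp [SS_add, add_modByMonic]
  map_smul' r h := by
    refine Prod.ext ?_ ?_ <;> funext k <;>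
      simp [SS_smul, smul_modByMonic]


lemma pi_sum_single {ι : Type*} [Fintype ι] [DecidableEq ι] (u : ι → ZMod 2) :
    ∑ k : ι, u k • Pi.single (M := fun _ => ZMod 2) k 1 = u := by
  funext j
  rw [Finset.sum_apply]
  simp only [Pi.smul_apply, Pi.single_apply, smul_eq_mul, mul_ite, mul_one, mul_zero]
  rw [Finset.sum_ite_eq]
  simp

lemma modrep {L : ℕ} (hL : 0 < L) (g : Polynomial (ZMod 2)) (m : ℕ) :
    ((X : Polynomial (ZMod 2)) ^ m * g) %ₘ Mp L
      = rep hL ((root (Mp L)) ^ m * AdjoinRoot.mk (Mp L) g) := by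
  rw [← rep_mk hL (X ^ m * g), map_mul, map_pow, AdjoinRoot.mk_X]

lemma poly_eq_zero_of {L : ℕ} (p : Polynomial (ZMod 2)) (hdeg : p.degree < (L : WithBot ℕ))
    (h : ∀ j < L, p.coeff j = 0) : p = 0 := by
  ext j
  rw [coeff_zero]
  by_cases hj : j < L
  · exact h j hj
  · exact coeff_eq_zero_of_degree_lt
      (lt_of_lt_of_le hdeg (by exact_mod_cast Nat.le_of_not_lt hj))

lemma dcoeff {L : ℕ} (hL : 0 < L) {ι' : Type*} [Fintype ι'] (pos : ι' → ℕ)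
    (hpos : ∀ k, pos k < L) (γ : ι' → ZMod 2) (g : Polynomial (ZMod 2)) (j : ℕ) (hj : j < L) :
    (rep hL (AdjoinRoot.mk (Mp L) g *
        AdjoinRoot.mk (Mp L) (∑ k : ι', C (γ k) * X ^ ((L - pos k) % L)))).coeff j
      = ∑ k : ι', γ k * (rep hL (AdjoinRoot.mk (Mp L) g)).coeff ((j + pos k) % L) := by
  have h1 : AdjoinRoot.mk (Mp L) (∑ k : ι', C (γ k) * X ^ ((L - pos k) % L))
      = ∑ k : ι', γ k • (root (Mp L)) ^ ((L - pos k) % L) := by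
    rw [map_sum]
    refine Finset.sum_congr rfl fun k _ => ?_
    rw [C_mul', ← AdjoinRoot.smul_mk, map_pow, AdjoinRoot.mk_X]
  rw [h1, Finset.mul_sum]
  have h2 : ∀ k : ι', AdjoinRoot.mk (Mp L) g * (γ k • (root (Mp L)) ^ ((L - pos k) % L))
      = γ k • ((root (Mp L)) ^ ((L - pos k) % L) * AdjoinRoot.mk (Mp L) g) := by
    intro k
    rw [mul_smul_comm, mul_comm]
  rw [Finset.sum_congr rfl fun k _ => h2 k, map_sum, finset_sum_coeff]
  refine Finset.sum_congr rfl fun k _ => ?_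
  rw [map_smul, coeff_smul, smul_eq_mul, rot hL _ _ j hj, N3 (hpos k) j]

lemma Psum_ne_zero {n : ℕ} (hn : 0 < n) :
    (∑ i : Fin n, (X : Polynomial (ZMod 2)) ^ (n - 1 - (i : ℕ))) ≠ 0 := by
  intro h
  have h0 : (∑ i : Fin n, (X : Polynomial (ZMod 2)) ^ (n - 1 - (i : ℕ))).coeff 0 = 1 := by
    rw [finset_sum_coeff]
    rw [Finset.sum_eq_single (⟨n - 1, by omega⟩ : Fin n)]
    · simp [coeff_X_pow]
    · intro i _ hne
      rw [coeff_X_pow, if_neg]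
      intro hEq
      apply hne
      apply Fin.ext
      have := i.2
      simp only at hEq ⊢
      omega
    · intro hmem
      exact absurd (Finset.mem_univ _) hmem
  rw [h, coeff_zero] at h0
  exact one_ne_zero h0.symm

lemma NWIN {L n s t k : ℕ} (hL : 0 < L) (ht : t < n - 1) (hk : k < L)
    (hEq : ((L - (s + (n - 2)) % L) % L + t) % L = (L - k) % L) :
    k = (s + (n - 2 - t)) % L := by
  apply nm_inj hL hk (Nat.mod_lt _ hL)
  have h1 : (s + (n - 2)) % L ≤ L := le_of_lt (Nat.mod_lt _ hL)
  have h2 : t ≤ n - 2 := by omega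
  have hc := (ZMod.natCast_eq_natCast_iff' _ _ L).mpr hEq
  rw [Nat.cast_add, ZMod.natCast_mod, cast_sub_mod L _ h1, ZMod.natCast_mod,
    cast_sub_mod L k hk.le, Nat.cast_add] at hc
  rw [ZMod.natCast_mod, Nat.cast_add, Nat.cast_sub h2]
  linear_combination hc

lemma NINJ {L k k0 : ℕ} (hk : k < L) (hk0 : k0 < L)
    (h : (L - k0) % L = (L - k) % L) : k = k0 := by
  have hL : 0 < L := lt_of_le_of_lt (Nat.zero_le k) hk
  apply nm_inj hL hk hk0
  have hc := (ZMod.natCast_eq_natCast_iff' _ _ L).mpr h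
  rw [cast_sub_mod L k0 hk0.le, cast_sub_mod L k hk.le] at hc
  linear_combination hc

lemma deg_gpoly {n L s : ℕ} (hL : 0 < L) (γ : Idx n L s → ZMod 2) :
    (∑ k : Idx n L s, C (γ k) * X ^ ((L - (k : ℕ)) % L)).degree < (L : WithBot ℕ) := by
  apply lt_of_le_of_lt (degree_sum_le _ _)
  have hbot : (⊥ : WithBot ℕ) < (L : WithBot ℕ) := by exact_mod_cast WithBot.bot_lt_coe L
  refine (Finset.sup_lt_iff hbot).mpr fun k _ => ?_
  apply lt_of_le_of_lt (degree_C_mul_X_pow_le _ _)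
  exact_mod_cast Nat.mod_lt _ hL

lemma win_gpoly {n L s : ℕ} (hL : 0 < L) (γ : Idx n L s → ZMod 2) :
    ∀ t < n - 1,
      (∑ k : Idx n L s, C (γ k) * X ^ ((L - (k : ℕ)) % L)).coeff
        (((L - (s + (n - 2)) % L) % L + t) % L) = 0 := by
  intro t ht
  rw [finset_sum_coeff]
  apply Finset.sum_eq_zero
  intro k _
  rw [coeff_C_mul, coeff_X_pow, if_neg, mul_zero]
  intro hEq
  exact k.2.2 (n - 2 - t) (by omega) (NWIN hL ht k.2.1 hEq)

lemma gpoly_coeff {n L s : ℕ} (γ : Idx n L s → ZMod 2) (k0 : Idx n L s) :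
    (∑ k : Idx n L s, C (γ k) * X ^ ((L - (k : ℕ)) % L)).coeff ((L - (k0 : ℕ)) % L)
      = γ k0 := by
  rw [finset_sum_coeff]
  rw [Finset.sum_eq_single k0]
  · rw [coeff_C_mul, coeff_X_pow, if_pos rfl, mul_one]
  · intro k _ hne
    rw [coeff_C_mul, coeff_X_pow, if_neg, mul_zero]
    intro hEq
    exact hne (Subtype.ext (NINJ k.2.1 k0.2.1 hEq))
  · intro hmem
    exact absurd (Finset.mem_univ _) hmem

lemma q_ne_zero {n : ℕ} (a a' : Fin n → σ) (i0 : Fin n) (hne : a i0 ≠ a' i0) :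
    pc n a (a i0) + pc n a' (a i0) ≠ 0 := by
  intro h
  have hco : (pc n a (a i0) + pc n a' (a i0)).coeff (n - 1 - (i0 : ℕ)) = 1 := by
    rw [coeff_add]
    have h1 : (pc n a (a i0)).coeff (n - 1 - (i0 : ℕ)) = 1 := by
      unfold pc
      rw [finset_sum_coeff, Finset.sum_eq_single i0]
      · rw [coeff_X_pow, if_pos rfl]
      · intro i hi hne2
        rw [coeff_X_pow, if_neg]
        intro hEq
        apply hne2
        apply Fin.ext
        have hi2 := i.2
        have hi02 := i0.2
        omega
      · intro hmem
        rw [Finset.mem_filter] at hmem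
        push_neg at hmem
        exact absurd rfl (hmem (Finset.mem_univ _))
    have h2 : (pc n a' (a i0)).coeff (n - 1 - (i0 : ℕ)) = 0 := by
      unfold pc
      rw [finset_sum_coeff]
      apply Finset.sum_eq_zero
      intro i hi
      rw [coeff_X_pow, if_neg]
      intro hEq
      have hieq : i = i0 := by
        apply Fin.ext
        have hi2 := i.2
        have hi02 := i0.2
        omega
      rw [Finset.mem_filter] at hi
      exact hne (by rw [← hi.2, hieq])
    rw [h1, h2, add_zero]
  rw [h, coeff_zero] at hco
  exact one_ne_zero hco.symm

theorem TT_surj (n L s : ℕ) (hn : 0 < n) (hnL : n ≤ L) (a a' : Fin n → σ)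
    (haa : a ≠ a') : Function.Surjective (TT (σ := σ) n L s a a') := by
  have hL : 0 < L := lt_of_lt_of_le hn hnL
  rw [← LinearMap.range_eq_top, ← Subspace.dualAnnihilator_inj,
    Submodule.dualAnnihilator_top, eq_bot_iff]
  intro f hf
  rw [Submodule.mem_bot]
  rw [Submodule.mem_dualAnnihilator] at hf
  have hAnn : ∀ h, f (TT (σ := σ) n L s a a' h) = 0 := fun h =>
    hf _ (LinearMap.mem_range_self _ h)
  set f1 := f.comp (LinearMap.inl (ZMod 2) (Idx n L s → ZMod 2) (Idx n L s → ZMod 2)) with hf1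
  set f2 := f.comp (LinearMap.inr (ZMod 2) (Idx n L s → ZMod 2) (Idx n L s → ZMod 2)) with hf2
  set α : Idx n L s → ZMod 2 := fun k => f1 (Pi.single k 1) with hα
  set β : Idx n L s → ZMod 2 := fun k => f2 (Pi.single k 1) with hβ
  have REPR : ∀ u v : Idx n L s → ZMod 2,
      f (u, v) = (∑ k, u k * α k) + (∑ k, v k * β k) := by
    intro u v
    have hsplit : (u, v) = ((u, 0) : (Idx n L s → ZMod 2) × (Idx n L s → ZMod 2)) + (0, v) := by
      rw [Prod.mk_add_mk, add_zero, zero_add]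
    rw [hsplit, map_add]
    have e1 : f (u, 0) = ∑ k, u k * α k := by
      have h' : f (u, 0) = f1 u := rfl
      rw [h']
      conv_lhs => rw [← pi_sum_single u]
      rw [map_sum]
      refine Finset.sum_congr rfl fun k _ => ?_
      rw [map_smul, smul_eq_mul]
    have e2 : f (0, v) = ∑ k, v k * β k := by
      have h' : f (0, v) = f2 v := rfl
      rw [h']
      conv_lhs => rw [← pi_sum_single v]
      rw [map_sum]
      refine Finset.sum_congr rfl fun k _ => ?_
      rw [map_smul, smul_eq_mul]
    rw [e1, e2]
  -- the dual polynomials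
  set Apoly : Polynomial (ZMod 2) := ∑ k : Idx n L s, C (α k) * X ^ ((L - (k : ℕ)) % L)
    with hApoly
  set Bpoly : Polynomial (ZMod 2) := ∑ k : Idx n L s, C (β k) * X ^ ((L - (k : ℕ)) % L)
    with hBpoly
  -- main annihilation relation
  have PROD0 : ∀ c : σ, AdjoinRoot.mk (Mp L) (pc n a c) * AdjoinRoot.mk (Mp L) Apoly
      + AdjoinRoot.mk (Mp L) (pc n a' c) * AdjoinRoot.mk (Mp L) Bpoly = 0 := by
    intro c
    rw [← (rep_eq_zero_iff hL _)]
    apply poly_eq_zero_of _ (rep_deg hL _)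
    intro j hj
    rw [map_add, coeff_add]
    rw [hApoly, hBpoly, dcoeff hL (fun k : Idx n L s => (k : ℕ)) (fun k => k.2.1) α _ j hj,
      dcoeff hL (fun k : Idx n L s => (k : ℕ)) (fun k => k.2.1) β _ j hj]
    -- use the annihilation hypothesis at m = (L - j) % L
    set m := (L - j) % L with hm
    have hmL : m < L := Nat.mod_lt _ hL
    have hmem : (X : Polynomial (ZMod 2)) ^ m ∈ degreeLT (ZMod 2) L := by
      rw [mem_degreeLT, degree_X_pow]
      exact_mod_cast hmL
    have h0 := hAnn (Pi.single c (⟨X ^ m, hmem⟩ : degreeLT (ZMod 2) L))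
    have hTT : (TT (σ := σ) n L s a a') (Pi.single c (⟨X ^ m, hmem⟩ : degreeLT (ZMod 2) L))
        = ((fun k : Idx n L s =>
              (SS n a (Pi.single c (⟨X ^ m, hmem⟩ : degreeLT (ZMod 2) L)) %ₘ Mp L).coeff (k : ℕ)),
           (fun k : Idx n L s =>
              (SS n a' (Pi.single c (⟨X ^ m, hmem⟩ : degreeLT (ZMod 2) L)) %ₘ Mp L).coeff (k : ℕ))) := rfl
    have hterm : ∀ (b : Fin n → σ) (k : Idx n L s),
        (SS n b (Pi.single c (⟨X ^ m, hmem⟩ : degreeLT (ZMod 2) L)) %ₘ Mp L).coeff (k : ℕ)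
          = (rep hL (AdjoinRoot.mk (Mp L) (pc n b c))).coeff ((j + (k : ℕ)) % L) := by
      intro b k
      rw [SS_single]
      show ((X ^ m * pc n b c) %ₘ Mp L).coeff (k : ℕ) = _
      rw [modrep hL, rot hL _ _ _ k.2.1, hm, N3 hj (k : ℕ), Nat.add_comm (k : ℕ) j]
    rw [hTT, REPR] at h0
    simp only [hterm] at h0
    rw [← h0]
    congr 1 <;> exact Finset.sum_congr rfl fun k _ => mul_comm _ _
  -- sum over all characters
  set A := AdjoinRoot.mk (Mp L) Apoly with hA
  set B := AdjoinRoot.mk (Mp L) Bpoly with hB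
  set Psum := ∑ i : Fin n, (X : Polynomial (ZMod 2)) ^ (n - 1 - (i : ℕ)) with hPsum
  have SUMZ : AdjoinRoot.mk (Mp L) Psum * (A + B) = 0 := by
    have h1 : ∑ c : σ, (AdjoinRoot.mk (Mp L) (pc n a c) * A
        + AdjoinRoot.mk (Mp L) (pc n a' c) * B) = 0 :=
      Finset.sum_eq_zero fun c _ => PROD0 c
    rw [Finset.sum_add_distrib, ← Finset.sum_mul, ← Finset.sum_mul,
      ← map_sum, ← map_sum, sum_pc a, sum_pc a'] at h1
    rw [← hPsum] at h1
    rw [mul_add]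
    exact h1
  have hABdeg : (Apoly + Bpoly).degree < (L : WithBot ℕ) := by
    apply lt_of_le_of_lt (degree_add_le _ _)
    exact max_lt (deg_gpoly hL α) (deg_gpoly hL β)
  have hABwin : ∀ t < n - 1,
      (Apoly + Bpoly).coeff (((L - (s + (n - 2)) % L) % L + t) % L) = 0 := by
    intro t ht
    rw [coeff_add, win_gpoly hL α t ht, win_gpoly hL β t ht, add_zero]
  have hABzero : Apoly + Bpoly = 0 := by
    apply key hL hn hnL Psum _ (Psum_ne_zero hn) (deg_fin_sum_lt hn _) hABdeg
      ((L - (s + (n - 2)) % L) % L) hABwin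
    rw [map_add]
    exact SUMZ
  have hBA : B = A := by
    have h1 : A + B = 0 := by rw [hA, hB, ← map_add, hABzero, map_zero]
    have h2 := add_self_eq_zero' A
    calc B = 0 + B := (zero_add B).symm
    _ = (A + A) + B := by rw [h2]
    _ = A + (A + B) := by ring
    _ = A + 0 := by rw [h1]
    _ = A := add_zero A
  -- use a position where a and a' differ
  obtain ⟨i0, hi0⟩ := Function.ne_iff.mp haa
  have hqzero : AdjoinRoot.mk (Mp L) (pc n a (a i0) + pc n a' (a i0)) * A = 0 := by
    have := PROD0 (a i0)
    rw [hBA] at this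
    rw [map_add, add_mul]
    exact this
  have hqdeg : (pc n a (a i0) + pc n a' (a i0)).degree < (n : WithBot ℕ) := by
    apply lt_of_le_of_lt (degree_add_le _ _)
    exact max_lt (deg_pc_lt hn a _) (deg_pc_lt hn a' _)
  have hAzero : Apoly = 0 :=
    key hL hn hnL _ Apoly (q_ne_zero a a' i0 hi0) hqdeg (deg_gpoly hL α)
      ((L - (s + (n - 2)) % L) % L) (win_gpoly hL α) hqzero
  have hBzero : Bpoly = 0 := by
    have := hABzero
    rw [hAzero, zero_add] at this
    exact this
  -- extract that all coefficients vanish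
  have hα0 : ∀ k, α k = 0 := by
    intro k
    rw [← gpoly_coeff α k, ← hApoly, hAzero, coeff_zero]
  have hβ0 : ∀ k, β k = 0 := by
    intro k
    rw [← gpoly_coeff β k, ← hBpoly, hBzero, coeff_zero]
  apply LinearMap.ext
  intro x
  have : f x = f (x.1, x.2) := rfl
  rw [this, REPR]
  simp [hα0, hβ0]


/-! ### Counting -/

lemma card_fiber_eq {R M N : Type*} [Ring R] [AddCommGroup M] [Module R M]
    [AddCommGroup N] [Module R N] (T : M →ₗ[R] N) (hs : Function.Surjective T) (Y : N) :
    Nat.card {x : M // T x = Y} = Nat.card {x : M // T x = 0} := by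
  obtain ⟨x0, hx0⟩ := hs Y
  apply Nat.card_congr
  exact
    { toFun := fun p => ⟨p.1 - x0, by rw [map_sub, p.2, hx0, sub_self]⟩
      invFun := fun p => ⟨p.1 + x0, by rw [map_add, p.2, hx0, zero_add]⟩
      left_inv := fun p => Subtype.ext (by simp)
      right_inv := fun p => Subtype.ext (by simp) }

lemma card_dom {R M N : Type*} [Ring R] [AddCommGroup M] [Module R M]
    [AddCommGroup N] [Module R N] (T : M →ₗ[R] N) (hs : Function.Surjective T) :
    Nat.card M = Nat.card N * Nat.card {x : M // T x = 0} := by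
  choose g hg using hs
  rw [← Nat.card_prod]
  apply Nat.card_congr
  exact
    { toFun := fun x => (T x, ⟨x - g (T x), by rw [map_sub, hg, sub_self]⟩)
      invFun := fun p => g p.1 + p.2.1
      left_inv := fun x => by
        show g (T x) + (x - g (T x)) = x
        rw [add_comm, sub_add_cancel]
      right_inv := fun p => by
        obtain ⟨yv, zv, hz⟩ := p
        have hfst : T (g yv + zv) = yv := by rw [map_add, hg, hz, add_zero]
        refine Prod.ext hfst ?_
        apply Subtype.ext
        show g yv + zv - g (T (g yv + zv)) = zv
        rw [hfst]
        abel }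

lemma NADD {L s t1 t2 : ℕ} (hL : 0 < L) (h1 : t1 < L) (h2 : t2 < L)
    (h : (s + t1) % L = (s + t2) % L) : t1 = t2 := by
  apply nm_inj hL h1 h2
  have hc : ((s + t1 : ℕ) : ZMod L) = ((s + t2 : ℕ) : ZMod L) :=
    (ZMod.natCast_eq_natCast_iff' _ _ L).mpr h
  rw [Nat.cast_add, Nat.cast_add] at hc
  exact add_left_cancel hc

lemma NCARD {n L s : ℕ} (hn : 0 < n) (hnL : n ≤ L) :
    Fintype.card (Idx n L s) = L - n + 1 := by
  have hL : 0 < L := lt_of_lt_of_le hn hnL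
  classical
  set W : Finset ℕ := (Finset.range (n - 1)).image (fun t => (s + t) % L) with hW
  have hsub : W ⊆ Finset.range L := by
    intro x hx
    rw [hW, Finset.mem_image] at hx
    obtain ⟨t, _, rfl⟩ := hx
    exact Finset.mem_range.mpr (Nat.mod_lt _ hL)
  have hcardW : W.card = n - 1 := by
    rw [hW, Finset.card_image_of_injOn, Finset.card_range]
    intro t1 h1 t2 h2 hEq
    rw [Finset.mem_coe, Finset.mem_range] at h1 h2
    exact NADD hL (by omega) (by omega) hEq
  have hset : (Finset.range L).filter (fun k => ∀ t < n - 1, k ≠ (s + t) % L)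
      = Finset.range L \ W := by
    ext k
    rw [Finset.mem_filter, Finset.mem_sdiff, hW, Finset.mem_image]
    constructor
    · rintro ⟨hk, h2⟩
      refine ⟨hk, ?_⟩
      rintro ⟨t, ht, hEq⟩
      exact h2 t (Finset.mem_range.mp ht) hEq.symm
    · rintro ⟨hk, h2⟩
      refine ⟨hk, fun t ht hEq => ?_⟩
      exact h2 ⟨t, Finset.mem_range.mpr ht, hEq.symm⟩
  rw [Fintype.card_of_subtype ((Finset.range L).filter (fun k => ∀ t < n - 1, k ≠ (s + t) % L))
    (by intro k; rw [Finset.mem_filter, Finset.mem_range])]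
  rw [hset, Finset.card_sdiff_of_subset hsub, Finset.card_range, hcardW]
  omega

end CPI

/-- Cyclic hashing is pairwise independent after discarding any n−1 consecutive
(mod L) bits. -/
theorem cyclic_pairwise_independent_after_discarding_bits
    {σ : Type*} [Fintype σ] (n L s : ℕ) (hn : 0 < n) (hnL : n ≤ L)
    (a a' : Fin n → σ) (haa : a ≠ a') (y y' : Polynomial (ZMod 2)) :
    prob (σ → {w : Polynomial (ZMod 2) // w.degree < (L : WithBot ℕ)})
      (fun h₁ =>
        (∀ k < L, (∀ t < n - 1, k ≠ (s + t) % L) →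
          ((∑ i : Fin n, (h₁ (a i)).val * X ^ (n - 1 - (i : ℕ)))
            %ₘ ((X : Polynomial (ZMod 2)) ^ L + 1)).coeff k = y.coeff k) ∧
        (∀ k < L, (∀ t < n - 1, k ≠ (s + t) % L) →
          ((∑ i : Fin n, (h₁ (a' i)).val * X ^ (n - 1 - (i : ℕ)))
            %ₘ ((X : Polynomial (ZMod 2)) ^ L + 1)).coeff k = y'.coeff k))
      = 1 / 2 ^ (2 * (L - n + 1)) := by
  classical
  have hL : 0 < L := lt_of_lt_of_le hn hnL
  haveI : Finite (Polynomial.degreeLT (ZMod 2) L) :=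
    Finite.of_equiv _ (Polynomial.degreeLTEquiv (ZMod 2) L).toEquiv.symm
  set T := CPI.TT (σ := σ) n L s a a' with hT
  have hsurj : Function.Surjective T := CPI.TT_surj n L s hn hnL a a' haa
  let e : (σ → {w : Polynomial (ZMod 2) // w.degree < (L : WithBot ℕ)})
      ≃ (σ → Polynomial.degreeLT (ZMod 2) L) :=
    Equiv.piCongrRight fun _ => Equiv.subtypeEquivRight fun w => Polynomial.mem_degreeLT.symm
  set Y : (CPI.Idx n L s → ZMod 2) × (CPI.Idx n L s → ZMod 2) :=
    (fun k => y.coeff (k : ℕ), fun k => y'.coeff (k : ℕ)) with hY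
  have main : ∀ (p : (σ → {w : Polynomial (ZMod 2) // w.degree < (L : WithBot ℕ)}) → Prop),
      (∀ ω, p ω ↔ T (e ω) = Y) → prob _ p = 1 / 2 ^ (2 * (L - n + 1)) := by
    intro p hp
    unfold prob
    have h1 : Nat.card {ω // p ω}
        = Nat.card {x : (σ → Polynomial.degreeLT (ZMod 2) L) // T x = 0} := by
      rw [Nat.card_congr (Equiv.subtypeEquiv (q := fun x => T x = Y) e hp)]
      exact CPI.card_fiber_eq T hsurj Y
    have h2 : Nat.card (σ → {w : Polynomial (ZMod 2) // w.degree < (L : WithBot ℕ)})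
        = Nat.card ((CPI.Idx n L s → ZMod 2) × (CPI.Idx n L s → ZMod 2))
          * Nat.card {x : (σ → Polynomial.degreeLT (ZMod 2) L) // T x = 0} := by
      rw [Nat.card_congr e]
      exact CPI.card_dom T hsurj
    have hE : Nat.card ((CPI.Idx n L s → ZMod 2) × (CPI.Idx n L s → ZMod 2))
        = 2 ^ (2 * (L - n + 1)) := by
      rw [Nat.card_prod, Nat.card_eq_fintype_card, Fintype.card_fun, ZMod.card,
        CPI.NCARD hn hnL, ← pow_add, two_mul]
    have hK : 0 < Nat.card {x : (σ → Polynomial.degreeLT (ZMod 2) L) // T x = 0} := by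
      haveI : Nonempty {x : (σ → Polynomial.degreeLT (ZMod 2) L) // T x = 0} :=
        ⟨⟨0, map_zero T⟩⟩
      exact Nat.card_pos
    rw [h1, h2, hE, Nat.cast_mul, Nat.cast_pow, mul_comm, ← div_div,
      div_self (by exact_mod_cast hK.ne' : (Nat.card {x : (σ → Polynomial.degreeLT (ZMod 2) L) // T x = 0} : ℚ) ≠ 0)]
    norm_num
  apply main
  intro ω
  constructor
  · rintro ⟨h1, h2⟩
    refine Prod.ext (funext fun k => ?_) (funext fun k => ?_)
    · exact h1 (k : ℕ) k.2.1 k.2.2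
    · exact h2 (k : ℕ) k.2.1 k.2.2
  · intro h
    have h1 := congrArg Prod.fst h
    have h2 := congrArg Prod.snd h
    rw [funext_iff] at h1 h2
    exact ⟨fun k hk hw => h1 ⟨k, hk, hw⟩, fun k hk hw => h2 ⟨k, hk, hw⟩⟩
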